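/- arXiv:1710.04915 — 3 statements merged into one kernel-verified Lean document; each statement's English description precedes it below -/
import Mathlib

section
/- Let k₁ : (0,1)×(-1,0) → [0,∞) and k₂ : (-1,0)×(0,1) → [0,∞) be measurable kernels with ∫_{-1}^0 k₁(v'',v) dv = 1 for a.e. v'' and ∫_0^1 k₂(v,v') dv ≤ 1 for a.e. v'. Then for every s ≠ 0, a > 0 and a.e. (v', v''), we have |∫_{-1}^0 k₁(v'',v) e^{-2isa/|v|} k₂(v,v') dv| < ∫_{-1}^0 k₁(v'',v) k₂(v,v') dv whenever the right-hand side is positive and k₁(v'',·)k₂(·,v') is not concentrated on a null set. -/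
open MeasureTheory

/-- Strict triangle inequality for the oscillatory kernel integral: for `s ≠ 0`, `a > 0`,
the modulus of `∫ k₁(v'',v) e^{-2isa/|v|} k₂(v,v') dv` is strictly less than
`∫ k₁(v'',v) k₂(v,v') dv` whenever the latter is positive (equivalently, the product
kernel is not concentrated on a null set). -/
theorem stmt2 (k₁ k₂ : ℝ → ℝ → ℝ) (a s : ℝ) (ha : 0 < a) (hs : s ≠ 0)
    (hk₁ : ∀ v'' v, 0 ≤ k₁ v'' v) (hk₂ : ∀ v v', 0 ≤ k₂ v v')
    (hmeas₁ : ∀ v'', Measurable (k₁ v'')) (hmeas₂ : ∀ v', Measurable fun v => k₂ v v')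
    (hnorm₁ : ∀ᵐ v'' ∂(volume.restrict (Set.Ioo (0:ℝ) 1)),
      ∫ v in Set.Ioo (-1:ℝ) 0, k₁ v'' v = 1)
    (hnorm₂ : ∀ᵐ v' ∂(volume.restrict (Set.Ioo (0:ℝ) 1)),
      ∫ v in Set.Ioo (-1:ℝ) 0, k₂ v v' ≤ 1) :
    ∀ v' v'' : ℝ,
      IntegrableOn (fun v => k₁ v'' v * k₂ v v') (Set.Ioo (-1:ℝ) 0) →
      (0 < ∫ v in Set.Ioo (-1:ℝ) 0, k₁ v'' v * k₂ v v') →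
      ¬ ((fun v => k₁ v'' v * k₂ v v') =ᵐ[volume.restrict (Set.Ioo (-1:ℝ) 0)] 0) →
      ‖∫ v in Set.Ioo (-1:ℝ) 0,
          (k₁ v'' v : ℂ) * Complex.exp (-(2 * s * a * Complex.I) / ((|v| : ℝ) : ℂ)) * (k₂ v v' : ℂ)‖
        < ∫ v in Set.Ioo (-1:ℝ) 0, k₁ v'' v * k₂ v v' := by
  intro v' v'' hInt hpos hne
  set S₀ : Set ℝ := Set.Ioo (-1:ℝ) 0 with hS₀
  set g : ℝ → ℝ := fun v => k₁ v'' v * k₂ v v' with hgdef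
  have hg0 : ∀ v, 0 ≤ g v := fun v => mul_nonneg (hk₁ _ _) (hk₂ _ _)
  set θ : ℝ → ℝ := fun v => -(2*s*a)/|v| with hθdef
  set F : ℝ → ℂ := fun v => (g v : ℂ) * Complex.exp ((θ v : ℝ) * Complex.I) with hFdef
  have h2sa : (2*s*a) ≠ 0 := by positivity
  -- rewrite the integrand
  have hcongr : Set.EqOn (fun v => (k₁ v'' v : ℂ) *
      Complex.exp (-(2 * s * a * Complex.I) / ((|v| : ℝ) : ℂ)) * (k₂ v v' : ℂ)) F S₀ := by
    intro v hv
    have hv0 : |v| ≠ 0 := abs_ne_zero.mpr (ne_of_lt hv.2)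
    have hv0' : ((|v| : ℝ) : ℂ) ≠ 0 := Complex.ofReal_ne_zero.mpr hv0
    have hexp : -(2 * s * a * Complex.I) / ((|v| : ℝ) : ℂ) = ((θ v : ℝ) : ℂ) * Complex.I := by
      simp only [hθdef]
      push_cast
      field_simp
    simp only [hFdef, hgdef, hexp]
    push_cast
    ring
  rw [setIntegral_congr_fun measurableSet_Ioo hcongr]
  -- measurability / integrability of F
  have hθm : Measurable θ := measurable_const.div measurable_abs
  have hgm : Measurable g := (hmeas₁ v'').mul (hmeas₂ v')
  have hFm : Measurable F := by
    apply Measurable.mul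
    · exact Complex.measurable_ofReal.comp hgm
    · exact Complex.continuous_exp.measurable.comp
        ((Complex.measurable_ofReal.comp hθm).mul measurable_const)
  have hFnorm : ∀ v, ‖F v‖ = g v := by
    intro v
    simp only [hFdef, norm_mul, Complex.norm_real, Real.norm_eq_abs, Complex.norm_exp_ofReal_mul_I, mul_one,
      abs_of_nonneg (hg0 v)]
  have hFint : IntegrableOn F S₀ := by
    refine Integrable.mono' hInt hFm.aestronglyMeasurable ?_
    filter_upwards with v
    rw [hFnorm v]
  by_cases hI : (∫ v in S₀, F v) = 0
  · rw [hI]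
    simpa using hpos
  set I := ∫ v in S₀, F v with hIdef
  set r : ℝ := ‖I‖ with hrdef
  have hr : 0 < r := by
    simpa [hrdef] using (norm_pos_iff.mpr hI)
  set c : ℂ := (starRingEnd ℂ) I / (r : ℂ) with hcdef
  have hcabs : ‖c‖ = 1 := by
    rw [hcdef, norm_div, Complex.norm_conj, Complex.norm_real, Real.norm_eq_abs, abs_of_pos hr, ← hrdef,
      div_self hr.ne']
  have hcI : c * I = (r : ℂ) := by
    rw [hcdef, div_mul_eq_mul_div, Complex.conj_mul', ← hrdef]
    rw [div_eq_iff (by exact_mod_cast hr.ne')]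
    push_cast
    ring
  have hcFint : Integrable (fun v => c * F v) (volume.restrict S₀) := hFint.const_mul c
  have hreint : Integrable (fun v => (c * F v).re) (volume.restrict S₀) := hcFint.re
  have hkey : r = ∫ v in S₀, (c * F v).re := by
    have h1 : (∫ v in S₀, c * F v) = (r : ℂ) := by rw [integral_const_mul, ← hIdef, hcI]
    have h2 := integral_re hcFint
    rw [h1] at h2
    simpa using h2.symm
  have hub : ∀ v, (c * F v).re ≤ g v := by
    intro v
    calc (c * F v).re ≤ ‖c * F v‖ := Complex.re_le_norm _
      _ = g v := by rw [norm_mul, hcabs, one_mul, hFnorm]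
  -- suppose the inequality fails
  by_contra hcon
  push_neg at hcon
  have hle' : (∫ v in S₀, (c * F v).re) ≤ ∫ v in S₀, g v :=
    integral_mono hreint hInt (fun v => hub v)
  have heqq : (∫ v in S₀, (c * F v).re) = ∫ v in S₀, g v := le_antisymm hle' (by
    calc (∫ v in S₀, g v) ≤ r := hcon
      _ = _ := hkey)
  have hsubint : Integrable (fun v => g v - (c * F v).re) (volume.restrict S₀) :=
    hInt.sub hreint
  have hzero : (∫ v in S₀, (g v - (c * F v).re)) = 0 := by
    rw [integral_sub hInt hreint, heqq, sub_self]
  have haeeq : (fun v => g v - (c * F v).re) =ᵐ[volume.restrict S₀] 0 := by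
    rw [← integral_eq_zero_iff_of_nonneg_ae ?_ hsubint]
    · exact hzero
    · filter_upwards with v
      simpa using hub v
  -- phase constant
  set c₀ : ℂ := c⁻¹ with hc₀def
  have hc₀abs : ‖c₀‖ = 1 := by rw [hc₀def, norm_inv, hcabs, inv_one]
  set θ₀ : ℝ := Complex.arg c₀ with hθ₀def
  have hc₀exp : Complex.exp ((θ₀ : ℝ) * Complex.I) = c₀ := by
    have := Complex.norm_mul_exp_arg_mul_I c₀
    rwa [hc₀abs, Complex.ofReal_one, one_mul] at this
  -- the bad set is countable
  have hθinj : ∀ v₁ ∈ S₀, ∀ v₂ ∈ S₀, θ v₁ = θ v₂ → v₁ = v₂ := by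
    intro v₁ h₁ v₂ h₂ h
    have h₁0 : v₁ ≠ 0 := ne_of_lt h₁.2
    have h₂0 : v₂ ≠ 0 := ne_of_lt h₂.2
    have h₁a : |v₁| ≠ 0 := abs_ne_zero.mpr h₁0
    have h₂a : |v₂| ≠ 0 := abs_ne_zero.mpr h₂0
    have hne' : -(2*s*a) ≠ 0 := neg_ne_zero.mpr h2sa
    have h' := (div_eq_div_iff h₁a h₂a).mp h
    have : |v₁| = |v₂| := (mul_left_cancel₀ hne' h').symm
    rw [abs_of_neg h₁.2, abs_of_neg h₂.2] at this
    linarith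
  have hNnull : volume {v ∈ S₀ | Complex.exp ((θ v : ℝ) * Complex.I) = c₀} = 0 := by
    have hsub : {v ∈ S₀ | Complex.exp ((θ v : ℝ) * Complex.I) = c₀} ⊆
        ⋃ n : ℤ, {v ∈ S₀ | θ v = θ₀ + n * (2 * Real.pi)} := by
      rintro v ⟨hvS, hv⟩
      rw [← hc₀exp, Complex.exp_eq_exp_iff_exists_int] at hv
      obtain ⟨n, hn⟩ := hv
      refine Set.mem_iUnion.mpr ⟨n, hvS, ?_⟩
      have : ((θ v : ℝ) : ℂ) = ((θ₀ + n * (2 * Real.pi) : ℝ) : ℂ) := by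
        have hI0 : (Complex.I : ℂ) ≠ 0 := Complex.I_ne_zero
        apply mul_right_cancel₀ hI0
        rw [hn]
        push_cast
        ring
      exact_mod_cast this
    refine measure_mono_null hsub (measure_iUnion_null fun n => ?_)
    apply Set.Subsingleton.measure_zero
    rintro v₁ ⟨h₁S, h₁⟩ v₂ ⟨h₂S, h₂⟩
    exact hθinj v₁ h₁S v₂ h₂S (h₁.trans h₂.symm)
  -- conclude g = 0 a.e., contradiction
  apply hne
  have hmemae : ∀ᵐ v ∂(volume.restrict S₀), v ∈ S₀ := ae_restrict_mem measurableSet_Ioo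
  have hNae : ∀ᵐ v ∂(volume.restrict S₀),
      v ∉ {v ∈ S₀ | Complex.exp ((θ v : ℝ) * Complex.I) = c₀} := by
    refine ae_restrict_of_ae ?_
    rw [ae_iff]
    simpa using hNnull
  filter_upwards [haeeq, hmemae, hNae] with v h1 h2 h3
  simp only [Pi.zero_apply, sub_eq_zero] at h1 ⊢
  by_contra hgv
  have hgvpos : 0 < g v := lt_of_le_of_ne (hg0 v) (Ne.symm (by exact_mod_cast hgv))
  apply h3
  refine ⟨h2, ?_⟩
  -- from h1 : g v = (c * F v).re deduce c * exp(θ v I) = 1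
  have hre : (c * Complex.exp ((θ v : ℝ) * Complex.I)).re = 1 := by
    have hexpand : (c * F v).re = g v * (c * Complex.exp ((θ v : ℝ) * Complex.I)).re := by
      simp only [hFdef]
      rw [show c * ((g v : ℂ) * Complex.exp ((θ v : ℝ) * Complex.I)) =
        (g v : ℂ) * (c * Complex.exp ((θ v : ℝ) * Complex.I)) by ring]
      simp [Complex.re_ofReal_mul]
    rw [hexpand] at h1
    have := h1.symm
    nlinarith [hgvpos]
  have habs1 : ‖c * Complex.exp ((θ v : ℝ) * Complex.I)‖ = 1 := by
    rw [norm_mul, hcabs, Complex.norm_exp_ofReal_mul_I, mul_one]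
  have him : (c * Complex.exp ((θ v : ℝ) * Complex.I)).im = 0 := by
    have hsq := Complex.sq_norm (c * Complex.exp ((θ v : ℝ) * Complex.I))
    rw [habs1] at hsq
    rw [Complex.normSq_apply, hre] at hsq
    nlinarith
  have hone : c * Complex.exp ((θ v : ℝ) * Complex.I) = 1 := by
    apply Complex.ext <;> simp [hre, him]
  have hcne : c ≠ 0 := by
    intro h; rw [h, norm_zero] at hcabs; norm_num at hcabs
  rw [hc₀def]
  field_simp
  linear_combination hone
end

section
/- Let X be a Banach space, (G_n) a sequence of bounded operators on X and G a bounded operator, with sup_n ‖G_n²‖ ≤ c < 1, sup_n ‖G_n‖ ≤ M, and G_n → G strongly (i.e. G_n x → G x for all x). Assume additionally that G_n² → G² strongly. Then 1 - G_n and 1 - G are invertible and (1-G_n)^{-1} x → (1-G)^{-1} x for every x ∈ X. -/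
open Filter

section Aux

set_option linter.unusedSectionVars false
variable {X : Type*} [NormedAddCommGroup X] [NormedSpace ℂ X] [CompleteSpace X]

/-- Strong convergence composed with norm-convergence of vectors, under a uniform bound. -/
lemma aux_tendsto_apply {A : ℕ → X →L[ℂ] X} {Al : X →L[ℂ] X} {C : ℝ}
    (hb : ∀ n, ‖A n‖ ≤ C)
    (hs : ∀ x, Tendsto (fun n => A n x) atTop (nhds (Al x)))
    {y : ℕ → X} {yl : X} (hy : Tendsto y atTop (nhds yl)) :
    Tendsto (fun n => A n (y n)) atTop (nhds (Al yl)) := by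
  rw [tendsto_iff_norm_sub_tendsto_zero] at hy ⊢
  have h1 : Tendsto (fun n => ‖A n (y n - yl)‖) atTop (nhds 0) := by
    have hC : Tendsto (fun n => C * ‖y n - yl‖) atTop (nhds 0) := by
      simpa using hy.const_mul C
    refine squeeze_zero (fun n => norm_nonneg _) (fun n => ?_) hC
    calc ‖A n (y n - yl)‖ ≤ ‖A n‖ * ‖y n - yl‖ := (A n).le_opNorm _
      _ ≤ C * ‖y n - yl‖ := by
        exact mul_le_mul_of_nonneg_right (hb n) (norm_nonneg _)
  have h2 : Tendsto (fun n => ‖A n yl - Al yl‖) atTop (nhds 0) := by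
    rw [← tendsto_zero_iff_norm_tendsto_zero]
    simpa using (hs yl).sub_const (Al yl)
  have : Tendsto (fun n => ‖A n (y n - yl)‖ + ‖A n yl - Al yl‖) atTop (nhds 0) := by
    simpa using h1.add h2
  refine squeeze_zero (fun n => norm_nonneg _) (fun n => ?_) this
  calc ‖A n (y n) - Al yl‖ = ‖A n (y n - yl) + (A n yl - Al yl)‖ := by
        congr 1
        simp [map_sub]
    _ ≤ ‖A n (y n - yl)‖ + ‖A n yl - Al yl‖ := norm_add_le _ _

/-- If `‖g * g‖ < 1` then `1 - g` is a unit. -/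
noncomputable def auxUnit (g : X →L[ℂ] X) (h : ‖g * g‖ < 1) : (X →L[ℂ] X)ˣ where
  val := 1 - g
  inv := (1 + g) * ↑(Units.oneSub (g * g) h)⁻¹
  val_inv := by
    have : (1 - g) * (1 + g) = 1 - g * g := by noncomm_ring
    rw [← mul_assoc, this]
    exact (Units.oneSub (g * g) h).val_inv
  inv_val := by
    have hcomm : Commute ((Units.oneSub (g * g) h : (X →L[ℂ] X)ˣ) : X →L[ℂ] X) (1 - g) := by
      show (1 - g * g) * (1 - g) = (1 - g) * (1 - g * g)
      noncomm_ring
    have hcomm' := hcomm.units_inv_left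
    rw [mul_assoc, hcomm'.eq, ← mul_assoc]
    have : (1 + g) * (1 - g) = 1 - g * g := by noncomm_ring
    rw [this]
    exact (Units.oneSub (g * g) h).val_inv

lemma auxInverse (g : X →L[ℂ] X) (h : ‖g * g‖ < 1) :
    Ring.inverse (1 - g) = (1 + g) * ↑(Units.oneSub (g * g) h)⁻¹ := by
  exact Ring.inverse_unit (auxUnit g h)

end Aux

/-- If `sup_n ‖G_n²‖ ≤ c < 1`, `sup_n ‖G_n‖ ≤ M`, `G_n → G` strongly and `G_n² → G²`
strongly, then `1 - G_n` and `1 - G` are invertible and `(1-G_n)⁻¹ → (1-G)⁻¹` strongly. -/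
theorem stmt10 {X : Type*} [NormedAddCommGroup X] [NormedSpace ℂ X] [CompleteSpace X]
    (G : ℕ → X →L[ℂ] X) (Glim : X →L[ℂ] X) (c M : ℝ) (hc : c < 1)
    (hGsq : ∀ n, ‖G n * G n‖ ≤ c) (hGb : ∀ n, ‖G n‖ ≤ M)
    (hstrong : ∀ x, Tendsto (fun n => G n x) atTop (nhds (Glim x)))
    (hstrong2 : ∀ x, Tendsto (fun n => (G n * G n) x) atTop (nhds ((Glim * Glim) x))) :
    (∀ n, IsUnit (1 - G n)) ∧ IsUnit (1 - Glim) ∧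
      ∀ x, Tendsto (fun n => Ring.inverse (1 - G n) x) atTop
        (nhds (Ring.inverse (1 - Glim) x)) := by
  have hc0 : 0 ≤ c := le_trans (norm_nonneg _) (hGsq 0)
  have hAn : ∀ n, ‖G n * G n‖ < 1 := fun n => lt_of_le_of_lt (hGsq n) hc
  have hAl_le : ‖Glim * Glim‖ ≤ c := by
    refine ContinuousLinearMap.opNorm_le_bound _ hc0 (fun x => ?_)
    refine le_of_tendsto ((hstrong2 x).norm) (Eventually.of_forall fun n => ?_)
    exact le_trans ((G n * G n).le_opNorm x)
      (mul_le_mul_of_nonneg_right (hGsq n) (norm_nonneg x))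
  have hAl : ‖Glim * Glim‖ < 1 := lt_of_le_of_lt hAl_le hc
  refine ⟨fun n => (auxUnit (G n) (hAn n)).isUnit,
    (auxUnit Glim hAl).isUnit, fun x => ?_⟩
  -- pointwise convergence of powers
  have hpow : ∀ (j : ℕ) (y : X),
      Tendsto (fun n => ((G n * G n) ^ j) y) atTop (nhds (((Glim * Glim) ^ j) y)) := by
    intro j
    induction j with
    | zero => intro y; simp
    | succ j ih =>
      intro y
      have : ∀ n, ((G n * G n) ^ (j + 1)) y = (G n * G n) (((G n * G n) ^ j) y) := by
        intro n; rw [pow_succ']; rfl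
      simp_rw [this]
      have hl : ((Glim * Glim) ^ (j + 1)) y = (Glim * Glim) (((Glim * Glim) ^ j) y) := by
        rw [pow_succ']; rfl
      rw [hl]
      exact aux_tendsto_apply hGsq hstrong2 (ih y)
  -- convergence of the geometric series, by dominated convergence
  have hsum : ∀ x, Tendsto (fun n => ∑' j, ((G n * G n) ^ j) x) atTop
      (nhds (∑' j, ((Glim * Glim) ^ j) x)) := by
    intro x
    refine tendsto_tsum_of_dominated_convergence
      (f := fun n j => ((G n * G n) ^ j) x) (bound := fun j => c ^ j * ‖x‖)
      (((summable_geometric_of_lt_one hc0 hc)).mul_right _) (fun j => hpow j x)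
      (Eventually.of_forall fun n j => ?_)
    calc ‖((G n * G n) ^ j) x‖ ≤ ‖(G n * G n) ^ j‖ * ‖x‖ :=
          ((G n * G n) ^ j).le_opNorm x
      _ ≤ c ^ j * ‖x‖ := by
          refine mul_le_mul_of_nonneg_right ?_ (norm_nonneg x)
          cases j with
          | zero => (have h : ‖(1 : X →L[ℂ] X)‖ ≤ 1 := ContinuousLinearMap.norm_id_le; simpa using h)
          | succ j =>
            exact le_trans (norm_pow_le' _ j.succ_pos)
              (pow_le_pow_left₀ (norm_nonneg _) (hGsq n) _)
  -- inverse of `1 - g²` applied to x equals the tsum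
  have hinv_apply : ∀ (g : X →L[ℂ] X) (h : ‖g * g‖ < 1) (x : X),
      (↑(Units.oneSub (g * g) h)⁻¹ : X →L[ℂ] X) x = ∑' j, ((g * g) ^ j) x := by
    intro g h x
    have : (↑(Units.oneSub (g * g) h)⁻¹ : X →L[ℂ] X) = ∑' j, (g * g) ^ j := rfl
    rw [this]
    exact ((ContinuousLinearMap.apply ℂ X x).map_tsum
      (summable_geometric_of_norm_lt_one h))
  -- rewrite both sides
  have hrw : ∀ n, Ring.inverse (1 - G n) x
      = (1 + G n) (∑' j, ((G n * G n) ^ j) x) := by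
    intro n
    rw [auxInverse (G n) (hAn n)]
    show (1 + G n) ((↑(Units.oneSub (G n * G n) (hAn n))⁻¹ : X →L[ℂ] X) x) = _
    rw [hinv_apply]
  have hrwl : Ring.inverse (1 - Glim) x
      = (1 + Glim) (∑' j, ((Glim * Glim) ^ j) x) := by
    rw [auxInverse Glim hAl]
    show (1 + Glim) ((↑(Units.oneSub (Glim * Glim) hAl)⁻¹ : X →L[ℂ] X) x) = _
    rw [hinv_apply]
  simp_rw [hrw, hrwl]
  refine aux_tendsto_apply (A := fun n => 1 + G n) (C := 1 + M)
    (fun n => le_trans (norm_add_le _ _)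
      (add_le_add (by (have h : ‖(1 : X →L[ℂ] X)‖ ≤ 1 := ContinuousLinearMap.norm_id_le; simpa using h)) (hGb n)))
    (fun y => ?_) (hsum x)
  simpa using (tendsto_const_nhds.add (hstrong y) :
    Tendsto (fun n => y + G n y) atTop (nhds (y + Glim y)))
end

section
/- Consequently (with u as above), there exist δ > 0 and ĉ > 0 such that |∫_{-1}^0 φ(v) e^{-2isa/|v|} ψ(v) dv| ≤ ∫_{-1}^0 φ(v)ψ(v) dv − ĉ s² for all |s| ≤ δ. -/
open MeasureTheory

private lemma cosLB {x : ℝ} (hx : |x| ≤ 3) : x ^ 2 / 5 ≤ 1 - Real.cos x := by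
  have hπ3 : (3:ℝ) < Real.pi := Real.pi_gt_three
  have h1 : Real.cos x ≤ 1 - 2 / Real.pi ^ 2 * x ^ 2 :=
    Real.cos_le_one_sub_mul_cos_sq (hx.trans (by linarith))
  have hπ' : (0:ℝ) < Real.pi ^ 2 := by positivity
  have h2 : Real.pi ^ 2 ≤ 10 := by nlinarith [Real.pi_lt_d2]
  have h5 : (1:ℝ)/5 ≤ 2/Real.pi^2 := by
    rw [div_le_div_iff₀ (by norm_num) hπ']; linarith
  nlinarith [mul_le_mul_of_nonneg_left h5 (sq_nonneg x)]

private lemma sinLB (x : ℝ) : |Real.sin x - x| ≤ 2 * x ^ 2 := by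
  rcases le_total |x| 1 with h | h
  · have key : ∀ y : ℝ, 0 ≤ y → y ≤ 1 → |Real.sin y - y| ≤ 2 * y ^ 2 := by
      intro y hy0 hy1
      rcases eq_or_lt_of_le hy0 with rfl | hy0'
      · simp
      have h1 := Real.sin_gt_sub_cube hy0'
      have h2 := Real.sin_lt hy0'
      rw [abs_sub_comm, abs_of_nonneg (by linarith)]
      have hy3 : y ^ 3 ≤ y ^ 2 := by nlinarith
      linarith
    rcases le_total 0 x with hx | hx
    · exact key x hx (by rwa [abs_of_nonneg hx] at h)
    · have := key (-x) (by linarith) (by rwa [abs_of_nonpos hx] at h)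
      rw [show Real.sin (-x) - (-x) = -(Real.sin x - x) by rw [Real.sin_neg]; ring,
        abs_neg, neg_sq] at this
      exact this
  · have h1 : |Real.sin x| ≤ 1 := Real.abs_sin_le_one x
    have h2 : |Real.sin x - x| ≤ |Real.sin x| + |x| := by
      simpa [sub_eq_add_neg, abs_neg] using abs_add_le (Real.sin x) (-x)
    nlinarith [sq_abs x, abs_nonneg x]

private lemma keyC {μ : Measure ℝ} (F θf : ℝ → ℝ)
    (hcos : Integrable (fun v => F v * Real.cos (θf v)) μ)
    (hsin : Integrable (fun v => F v * Real.sin (θf v)) μ) :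
    ∫ v, (F v : ℂ) * Complex.exp (↑(θf v) * Complex.I) ∂μ
      = ↑(∫ v, F v * Real.cos (θf v) ∂μ) + ↑(∫ v, F v * Real.sin (θf v) ∂μ) * Complex.I := by
  have h1 : ∀ v, (F v : ℂ) * Complex.exp (↑(θf v) * Complex.I)
      = ((F v * Real.cos (θf v) : ℝ) : ℂ) + ((F v * Real.sin (θf v) : ℝ) : ℂ) * Complex.I := by
    intro v
    rw [Complex.exp_mul_I, ← Complex.ofReal_cos, ← Complex.ofReal_sin]
    push_cast
    ring
  have hi1 : Integrable (fun v => ((F v * Real.cos (θf v) : ℝ) : ℂ)) μ := hcos.ofReal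
  have hi2 : Integrable (fun v => ((F v * Real.sin (θf v) : ℝ) : ℂ) * Complex.I) μ :=
    hsin.ofReal.mul_const Complex.I
  rw [integral_congr_ae (Filter.Eventually.of_forall h1), integral_add hi1 hi2,
    integral_mul_const]
  congr 1
  · exact integral_ofReal
  · congr 1
    exact integral_ofReal

private lemma absC (x y : ℝ) : ‖(↑x + ↑y * Complex.I : ℂ)‖ = Real.sqrt (x^2 + y^2) := by
  rw [Complex.norm_def, Complex.normSq_add_mul_I]

set_option maxHeartbeats 1000000 in
/-- There exist `δ > 0` and `ĉ > 0` such that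
`|∫ φ e^{-2isa/|v|} ψ dv| ≤ ∫ φψ dv - ĉ s²` for all `|s| ≤ δ`. -/
theorem stmt13 (φ ψ : ℝ → ℝ) (a : ℝ) (ha : 0 < a)
    (hφ : Measurable φ) (hψ : Measurable ψ)
    (hφ0 : ∀ v ∈ Set.Ioo (-1:ℝ) 0, 0 ≤ φ v) (hψ0 : ∀ v ∈ Set.Ioo (-1:ℝ) 0, 0 ≤ ψ v)
    (hint : IntegrableOn (fun v => φ v * ψ v * (1 + |v|⁻¹ + (|v| ^ 2)⁻¹))
      (Set.Ioo (-1:ℝ) 0))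
    (hne : ¬ ((fun v => φ v * ψ v) =ᵐ[volume.restrict (Set.Ioo (-1:ℝ) 0)] 0)) :
    ∃ δ > (0:ℝ), ∃ c > (0:ℝ), ∀ s : ℝ, |s| ≤ δ →
      ‖∫ v in Set.Ioo (-1:ℝ) 0,
          (φ v : ℂ) * Complex.exp (-(2 * s * a * Complex.I) / ((|v| : ℝ) : ℂ)) * (ψ v : ℂ)‖
        ≤ (∫ v in Set.Ioo (-1:ℝ) 0, φ v * ψ v) - c * s ^ 2 := by
  classical
  set μ := volume.restrict (Set.Ioo (-1:ℝ) 0) with hμdef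
  set F : ℝ → ℝ := fun v => φ v * ψ v with hFdef
  have hFm : Measurable F := hφ.mul hψ
  have hmem : ∀ᵐ v ∂μ, v ∈ Set.Ioo (-1:ℝ) 0 := ae_restrict_mem measurableSet_Ioo
  have hbase : ∀ᵐ v ∂μ, 0 ≤ F v ∧ 0 < |v| ∧ |v| ≤ 1 := by
    filter_upwards [hmem] with v hv
    refine ⟨mul_nonneg (hφ0 v hv) (hψ0 v hv), ?_, ?_⟩
    · rw [abs_of_neg hv.2]; linarith [hv.2]
    · rw [abs_of_neg hv.2]; linarith [hv.1]
  have hF0 : 0 ≤ᵐ[μ] F := hbase.mono fun v h => h.1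
  have hwm1 : Measurable fun v : ℝ => |v|⁻¹ := measurable_abs.inv
  have hint' : Integrable (fun v => F v * (1 + |v|⁻¹ + (|v| ^ 2)⁻¹)) μ := hint
  have hbound : ∀ᵐ v ∂μ, 0 ≤ F v ∧ 1 ≤ |v|⁻¹ := by
    filter_upwards [hbase] with v h
    exact ⟨h.1, (one_le_inv₀ h.2.1).mpr h.2.2⟩
  have hf : Integrable F μ := by
    refine hint'.mono' hFm.aestronglyMeasurable ?_
    filter_upwards [hbound] with v h
    have hi0 : (0:ℝ) ≤ |v|⁻¹ := by positivity
    have hi2 : (0:ℝ) ≤ (|v|^2)⁻¹ := by positivity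
    rw [Real.norm_eq_abs, abs_of_nonneg h.1]
    nlinarith [h.1, h.2]
  have hf1 : Integrable (fun v => F v * |v|⁻¹) μ := by
    refine hint'.mono' (hFm.mul hwm1).aestronglyMeasurable ?_
    filter_upwards [hbound] with v h
    have hi0 : (0:ℝ) ≤ |v|⁻¹ := by positivity
    have hi2 : (0:ℝ) ≤ (|v|^2)⁻¹ := by positivity
    rw [Real.norm_eq_abs, abs_of_nonneg (mul_nonneg h.1 hi0)]
    nlinarith [h.1, h.2]
  have hf2 : Integrable (fun v => F v * (|v|^2)⁻¹) μ := by
    refine hint'.mono' (hFm.mul (measurable_abs.pow_const 2).inv).aestronglyMeasurable ?_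
    filter_upwards [hbound] with v h
    have hi0 : (0:ℝ) ≤ |v|⁻¹ := by positivity
    have hi2 : (0:ℝ) ≤ (|v|^2)⁻¹ := by positivity
    rw [Real.norm_eq_abs, abs_of_nonneg (mul_nonneg h.1 hi2)]
    nlinarith [h.1, h.2]
  have hf2' : Integrable (fun v => F v * (|v|⁻¹)^2) μ := by
    have e : (fun v : ℝ => F v * (|v|⁻¹)^2) = fun v => F v * (|v|^2)⁻¹ := by
      funext v; rw [inv_pow]
    rw [e]; exact hf2
  set M := ∫ v, F v ∂μ with hMdef
  have hM : 0 < M := by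
    rcases (integral_nonneg_of_ae hF0).lt_or_eq with h | h
    · exact h
    · exact absurd ((integral_eq_zero_iff_of_nonneg_ae hF0 hf).mp h.symm) hne
  have hg_int : Integrable (fun v => (2*a) * (F v * |v|⁻¹)) μ := hf1.const_mul _
  set c₀ : ℝ := (∫ v, (2*a) * (F v * |v|⁻¹) ∂μ) / M with hc₀def
  set θ : ℝ → ℝ := fun v => 2*a*|v|⁻¹ - c₀ with hθdef
  have hθm : Measurable θ := (hwm1.const_mul (2*a)).sub_const c₀
  have hfθ_eq : (fun v => F v * θ v) = fun v => (2*a) * (F v * |v|⁻¹) - c₀ * F v := by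
    funext v; simp only [hθdef]; ring
  have hfθ : Integrable (fun v => F v * θ v) μ := by
    rw [hfθ_eq]; exact hg_int.sub (hf.const_mul c₀)
  have hmean : ∫ v, F v * θ v ∂μ = 0 := by
    rw [hfθ_eq, integral_sub hg_int (hf.const_mul c₀), integral_const_mul c₀ F,
      hc₀def, div_mul_cancel₀ _ hM.ne', sub_self]
  have hfθ2 : Integrable (fun v => F v * θ v ^ 2) μ := by
    have e : (fun v => F v * θ v ^ 2)
        = fun v => ((4*a^2) * (F v * (|v|⁻¹)^2) - (4*a*c₀) * (F v * |v|⁻¹)) + c₀^2 * F v := by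
      funext v; simp only [hθdef]; ring
    rw [e]
    exact ((hf2'.const_mul _).sub (hf1.const_mul _)).add (hf.const_mul _)
  set K := ∫ v, F v * θ v ^ 2 ∂μ with hKdef
  have hK0 : 0 ≤ K :=
    integral_nonneg_of_ae (hF0.mono fun v h => mul_nonneg h (sq_nonneg _))
  -- the point where θ vanishes
  have hsub : ∀ v ∈ Set.Ioo (-1:ℝ) 0, θ v = 0 → v = -(2*a)/c₀ := by
    intro v hv hθv
    have hv0 : v < 0 := hv.2
    have habs : |v| = -v := abs_of_neg hv0
    simp only [hθdef, habs] at hθv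
    have hnv : 0 < -v := by linarith
    have h2 : 2*a*(-v)⁻¹ = c₀ := by linarith
    have hc0 : c₀ ≠ 0 := by
      rw [← h2]; exact ne_of_gt (mul_pos (by linarith) (inv_pos.2 hnv))
    have hvne : v ≠ 0 := ne_of_lt hv0
    field_simp at h2 ⊢
    linarith
  have hptnull : μ {-(2*a)/c₀} = 0 :=
    le_antisymm (le_trans (Measure.restrict_apply_le _ _) (by simp)) (by positivity)
  clear_value μ F M c₀ θ K
  -- good sets
  set E : ℕ → Set ℝ := fun n =>
      Set.Ioo (-1:ℝ) 0 ∩ {v | ((n:ℝ)+1)⁻¹ ≤ |θ v|} ∩ {v | |θ v| ≤ (n:ℝ)+1} with hEdef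
  have hEmeas : ∀ n, MeasurableSet (E n) := fun n =>
    (measurableSet_Ioo.inter (measurableSet_le measurable_const hθm.abs)).inter
      (measurableSet_le hθm.abs measurable_const)
  have hEpos : ∃ n, 0 < ∫ v in E n, F v ∂μ := by
    by_contra hcon
    push_neg at hcon
    have hzero : ∀ n, ∀ᵐ v ∂μ, v ∈ E n → F v = 0 := by
      intro n
      have hFae : 0 ≤ᵐ[μ.restrict (E n)] F := ae_restrict_of_ae hF0
      have hInt : Integrable F (μ.restrict (E n)) := hf.restrict
      have h0 : ∫ v in E n, F v ∂μ = 0 :=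
        le_antisymm (hcon n) (integral_nonneg_of_ae hFae)
      have h1 : F =ᵐ[μ.restrict (E n)] 0 :=
        (integral_eq_zero_iff_of_nonneg_ae hFae hInt).mp h0
      exact (ae_restrict_iff' (hEmeas n)).mp h1
    have hall : ∀ᵐ v ∂μ, ∀ n, v ∈ E n → F v = 0 := ae_all_iff.mpr hzero
    have hptae : ∀ᵐ v ∂μ, v ≠ -(2*a)/c₀ := by
      refine ae_iff.mpr ?_
      simpa [not_not] using hptnull
    apply hne
    filter_upwards [hall, hmem, hptae] with v h1 h2 h3
    have hθne : θ v ≠ 0 := fun h => h3 (hsub v h2 h)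
    have habs : 0 < |θ v| := abs_pos.2 hθne
    obtain ⟨n, hn⟩ := exists_nat_ge (max |θ v|⁻¹ |θ v|)
    have hnn : max |θ v|⁻¹ |θ v| ≤ (n:ℝ)+1 := by linarith
    have hc1 : ((n:ℝ)+1)⁻¹ ≤ |θ v| := by
      rw [inv_le_comm₀ (by positivity) habs]
      exact le_trans (le_max_left _ _) hnn
    exact h1 n ⟨⟨h2, hc1⟩, le_trans (le_max_right _ _) hnn⟩
  obtain ⟨n₀, hmpos⟩ := hEpos
  set m := ∫ v in E n₀, F v ∂μ with hmdef
  set b : ℝ := (n₀:ℝ) + 1 with hbdef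
  have hb1 : (1:ℝ) ≤ b := by
    simp only [hbdef]; linarith [Nat.cast_nonneg (α := ℝ) n₀]
  have hbpos : (0:ℝ) < b := by linarith
  -- per-s integrands
  have hcos_int : ∀ s : ℝ, Integrable (fun v => F v * Real.cos (s * θ v)) μ := by
    intro s
    refine hf.mono' (hFm.mul (Real.measurable_cos.comp (hθm.const_mul s))).aestronglyMeasurable ?_
    filter_upwards [hF0] with v h
    rw [Real.norm_eq_abs, abs_mul, abs_of_nonneg h]
    exact mul_le_of_le_one_right h (Real.abs_cos_le_one _)
  have hsin_int : ∀ s : ℝ, Integrable (fun v => F v * Real.sin (s * θ v)) μ := by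
    intro s
    refine hf.mono' (hFm.mul (Real.measurable_sin.comp (hθm.const_mul s))).aestronglyMeasurable ?_
    filter_upwards [hF0] with v h
    rw [Real.norm_eq_abs, abs_mul, abs_of_nonneg h]
    exact mul_le_of_le_one_right h (Real.abs_sin_le_one _)
  clear_value m b
  set c₁ : ℝ := m / (5*b^2) with hc₁def
  have hc₁pos : 0 < c₁ := div_pos hmpos (by positivity)
  refine ⟨min (3/b) (min (Real.sqrt (M/(K+1))) (Real.sqrt (M*c₁/(4*K^2 + c₁^2)))), ?_,
    c₁/2, by positivity, ?_⟩
  · refine lt_min (by positivity) (lt_min (Real.sqrt_pos.2 (by positivity)) (Real.sqrt_pos.2 (by positivity)))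
  intro s hs
  have hs1 : |s| ≤ 3/b := le_trans hs (min_le_left _ _)
  have hs2 : |s| ≤ Real.sqrt (M/(K+1)) := le_trans hs ((min_le_right _ _).trans (min_le_left _ _))
  have hs3 : |s| ≤ Real.sqrt (M*c₁/(4*K^2+c₁^2)) :=
    le_trans hs ((min_le_right _ _).trans (min_le_right _ _))
  have hs2' : s^2 ≤ M/(K+1) := by
    have h := Real.sq_sqrt (show (0:ℝ) ≤ M/(K+1) by positivity)
    nlinarith [sq_abs s, pow_le_pow_left₀ (abs_nonneg s) hs2 2]
  have hs3' : s^2 ≤ M*c₁/(4*K^2+c₁^2) := by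
    have h := Real.sq_sqrt (show (0:ℝ) ≤ M*c₁/(4*K^2+c₁^2) by positivity)
    nlinarith [sq_abs s, pow_le_pow_left₀ (abs_nonneg s) hs3 2]
  have hsb : |s| * b ≤ 3 := (le_div_iff₀ hbpos).mp hs1
  clear_value c₁
  set Cs := ∫ v, F v * Real.cos (s*θ v) ∂μ with hCsdef
  set Ss := ∫ v, F v * Real.sin (s*θ v) ∂μ with hSsdef
  -- integrability of 1 - cos variant
  have hone_eq : (fun v => F v * (1 - Real.cos (s*θ v)))
      = fun v => F v - F v * Real.cos (s*θ v) := by funext v; ring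
  have hone : Integrable (fun v => F v * (1 - Real.cos (s*θ v))) μ := by
    rw [hone_eq]; exact hf.sub (hcos_int s)
  have hCs_eq : ∫ v, F v * (1 - Real.cos (s*θ v)) ∂μ = M - Cs := by
    rw [hone_eq, integral_sub hf (hcos_int s), ← hMdef, ← hCsdef]
  -- lower bound on 1 - cos integral
  have hlow : c₁ * s^2 ≤ ∫ v, F v * (1 - Real.cos (s*θ v)) ∂μ := by
    have step1 : c₁ * s^2 = ∫ v in E n₀, (s^2/(5*b^2)) * F v ∂μ := by
      rw [integral_const_mul, ← hmdef, hc₁def]; ring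
    have step2 : ∫ v in E n₀, (s^2/(5*b^2)) * F v ∂μ
        ≤ ∫ v in E n₀, F v * (1 - Real.cos (s*θ v)) ∂μ := by
      refine integral_mono_ae ((hf.const_mul _).restrict) hone.restrict ?_
      filter_upwards [ae_restrict_mem (hEmeas n₀), ae_restrict_of_ae hF0] with v hvE hvF
      obtain ⟨⟨hIoo, hlo⟩, hup⟩ := hvE
      have hblo : b⁻¹ ≤ |θ v| := by rw [hbdef]; exact hlo
      have hbup : |θ v| ≤ b := by rw [hbdef]; exact hup
      have hx : |s * θ v| ≤ 3 := by
        rw [abs_mul]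
        calc |s| * |θ v| ≤ |s| * b := by
              exact mul_le_mul_of_nonneg_left hbup (abs_nonneg s)
          _ ≤ 3 := hsb
      have hcos := cosLB hx
      have hθsq : (b⁻¹)^2 ≤ θ v^2 := by
        have := pow_le_pow_left₀ (by positivity) hblo 2
        rwa [sq_abs] at this
      have hbb : b^2 * (b⁻¹)^2 = 1 := by field_simp
      have hdiv : s^2/(5*b^2) ≤ (s*θ v)^2/5 := by
        have h7 : s^2 * (b^2 * (b⁻¹)^2) ≤ s^2 * (b^2 * θ v ^ 2) :=
          mul_le_mul_of_nonneg_left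
            (mul_le_mul_of_nonneg_left hθsq (sq_nonneg b)) (sq_nonneg s)
        rw [hbb, mul_one] at h7
        rw [mul_pow, div_le_div_iff₀ (by positivity) (by norm_num)]
        nlinarith [h7]
      calc (s^2/(5*b^2)) * F v ≤ ((s*θ v)^2/5) * F v :=
            mul_le_mul_of_nonneg_right hdiv hvF
        _ ≤ (1 - Real.cos (s*θ v)) * F v :=
            mul_le_mul_of_nonneg_right hcos hvF
        _ = F v * (1 - Real.cos (s*θ v)) := by ring
    have step3 : ∫ v in E n₀, F v * (1 - Real.cos (s*θ v)) ∂μ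
        ≤ ∫ v, F v * (1 - Real.cos (s*θ v)) ∂μ := by
      refine setIntegral_le_integral hone ?_
      filter_upwards [hF0] with v h
      exact mul_nonneg h (by linarith [Real.cos_le_one (s*θ v)])
    calc c₁ * s^2 = ∫ v in E n₀, (s^2/(5*b^2)) * F v ∂μ := step1
      _ ≤ ∫ v in E n₀, F v * (1 - Real.cos (s*θ v)) ∂μ := step2
      _ ≤ ∫ v, F v * (1 - Real.cos (s*θ v)) ∂μ := step3
  have hCup : Cs ≤ M - c₁ * s^2 := by
    have h := hlow; rw [hCs_eq] at h; linarith
  -- upper bound: Cs ≥ M - s^2 K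
  have hsqint : Integrable (fun v => F v * (s*θ v)^2) μ := by
    have e : (fun v => F v * (s*θ v)^2) = fun v => s^2 * (F v * θ v^2) := by
      funext v; ring
    rw [e]; exact hfθ2.const_mul _
  have hup2 : ∫ v, F v * (1 - Real.cos (s*θ v)) ∂μ ≤ s^2 * K := by
    have e : s^2 * K = ∫ v, F v * (s*θ v)^2 ∂μ := by
      have e2 : (fun v => F v * (s*θ v)^2) = fun v => s^2 * (F v * θ v^2) := by
        funext v; ring
      rw [e2, integral_const_mul, hKdef]
    rw [e]
    refine integral_mono_ae hone hsqint ?_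
    filter_upwards [hF0] with v h
    have hcb := Real.one_sub_sq_div_two_le_cos (x := s * θ v)
    have : 1 - Real.cos (s*θ v) ≤ (s*θ v)^2 := by nlinarith [sq_nonneg (s*θ v)]
    exact mul_le_mul_of_nonneg_left this h
  have hClow : M - s^2 * K ≤ Cs := by
    have h := hup2; rw [hCs_eq] at h; linarith
  have hsK : s^2 * K ≤ M := by
    have h := (le_div_iff₀ (show (0:ℝ) < K+1 by linarith)).mp hs2'
    nlinarith [sq_nonneg s]
  have hC0 : 0 ≤ Cs := by linarith
  -- sine bound
  have hSb : |Ss| ≤ 2*(s^2*K) := by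
    have hdint : Integrable (fun v => F v * (Real.sin (s*θ v) - s*θ v)) μ := by
      have e : (fun v => F v * (Real.sin (s*θ v) - s*θ v))
          = fun v => F v * Real.sin (s*θ v) - s * (F v * θ v) := by
        funext v; ring
      rw [e]; exact (hsin_int s).sub (hfθ.const_mul s)
    have hSeq : Ss = ∫ v, F v * (Real.sin (s*θ v) - s*θ v) ∂μ := by
      have e : (fun v => F v * Real.sin (s*θ v))
          = fun v => F v * (Real.sin (s*θ v) - s*θ v) + s * (F v * θ v) := by
        funext v; ring
      rw [hSsdef, e, integral_add hdint (hfθ.const_mul s), integral_const_mul, hmean]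
      ring
    rw [hSeq]
    have habs : |∫ v, F v * (Real.sin (s*θ v) - s*θ v) ∂μ|
        ≤ ∫ v, |F v * (Real.sin (s*θ v) - s*θ v)| ∂μ := by
      have h := norm_integral_le_integral_norm (μ := μ)
        (fun v => F v * (Real.sin (s*θ v) - s*θ v))
      simpa only [Real.norm_eq_abs] using h
    refine le_trans habs ?_
    have hmono : ∫ v, |F v * (Real.sin (s*θ v) - s*θ v)| ∂μ
        ≤ ∫ v, (2*s^2) * (F v * θ v^2) ∂μ := by
      refine integral_mono_ae hdint.abs (hfθ2.const_mul _) ?_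
      filter_upwards [hF0] with v h
      rw [abs_mul, abs_of_nonneg h]
      calc F v * |Real.sin (s*θ v) - s*θ v| ≤ F v * (2*(s*θ v)^2) :=
            mul_le_mul_of_nonneg_left (sinLB (s*θ v)) h
        _ = (2*s^2) * (F v * θ v^2) := by ring
    refine le_trans hmono ?_
    rw [integral_const_mul, hKdef]
    ring_nf
    exact le_refl _
  -- complex computation
  have hz1 : (∫ v, (φ v : ℂ) * Complex.exp (-(2 * s * a * Complex.I) / ((|v| : ℝ) : ℂ))
        * (ψ v : ℂ) ∂μ)
      = ∫ v, (F v : ℂ) * Complex.exp (↑(-(s * (2*a*|v|⁻¹))) * Complex.I) ∂μ := by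
    refine integral_congr_ae (Filter.Eventually.of_forall fun v => ?_)
    simp only [hFdef]
    push_cast
    ring
  have hcosn : Integrable (fun v => F v * Real.cos (-(s * θ v))) μ :=
    (hcos_int s).congr (Filter.Eventually.of_forall fun v => by simp [Real.cos_neg])
  have hsinn : Integrable (fun v => F v * Real.sin (-(s * θ v))) μ :=
    ((hsin_int s).neg.congr (Filter.Eventually.of_forall fun v => by
      simp [Real.sin_neg]))
  have hmulin : Complex.exp (↑(s*c₀) * Complex.I)
        * ∫ v, (F v : ℂ) * Complex.exp (↑(-(s * (2*a*|v|⁻¹))) * Complex.I) ∂μ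
      = ∫ v, (F v : ℂ) * Complex.exp (↑(-(s * θ v)) * Complex.I) ∂μ := by
    rw [← integral_const_mul]
    refine integral_congr_ae (Filter.Eventually.of_forall fun v => ?_)
    have hexp : Complex.exp (↑(s*c₀) * Complex.I)
          * Complex.exp (↑(-(s * (2*a*|v|⁻¹))) * Complex.I)
        = Complex.exp (↑(-(s * θ v)) * Complex.I) := by
      rw [← Complex.exp_add]
      congr 1
      simp only [hθdef]
      push_cast
      ring
    calc Complex.exp (↑(s*c₀) * Complex.I)
          * ((F v : ℂ) * Complex.exp (↑(-(s * (2*a*|v|⁻¹))) * Complex.I))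
        = (F v : ℂ) * (Complex.exp (↑(s*c₀) * Complex.I)
            * Complex.exp (↑(-(s * (2*a*|v|⁻¹))) * Complex.I)) := by ring
      _ = (F v : ℂ) * Complex.exp (↑(-(s * θ v)) * Complex.I) := by rw [hexp]
  have hCneg : ∫ v, F v * Real.cos (-(s * θ v)) ∂μ = Cs := by
    rw [hCsdef]
    refine integral_congr_ae (Filter.Eventually.of_forall fun v => ?_)
    simp [Real.cos_neg]
  have hSneg : ∫ v, F v * Real.sin (-(s * θ v)) ∂μ = -Ss := by
    rw [hSsdef, ← integral_neg]
    refine integral_congr_ae (Filter.Eventually.of_forall fun v => ?_)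
    simp [Real.sin_neg]
  have hzabs : ‖∫ v, (φ v : ℂ)
        * Complex.exp (-(2 * s * a * Complex.I) / ((|v| : ℝ) : ℂ)) * (ψ v : ℂ) ∂μ‖
      = Real.sqrt (Cs^2 + Ss^2) := by
    rw [hz1]
    have h1 : ‖∫ v, (F v : ℂ) * Complex.exp (↑(-(s * (2*a*|v|⁻¹))) * Complex.I) ∂μ‖
        = ‖Complex.exp (↑(s*c₀) * Complex.I)
            * ∫ v, (F v : ℂ) * Complex.exp (↑(-(s * (2*a*|v|⁻¹))) * Complex.I) ∂μ‖ := by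
      rw [norm_mul, Complex.norm_exp_ofReal_mul_I, one_mul]
    rw [h1, hmulin, keyC F (fun v => -(s * θ v)) hcosn hsinn, hCneg, hSneg, absC]
    ring_nf
  rw [hzabs]
  -- final numeric assembly
  have hRHS0 : 0 ≤ M - c₁ * s^2 := by linarith
  have hsD : s^2 * (4*K^2+c₁^2) ≤ M*c₁ :=
    (le_div_iff₀ (by positivity)).mp hs3'
  have hsq : Cs^2 + Ss^2 ≤ (M - (c₁/2) * s^2)^2 := by
    have h1 : Cs^2 ≤ (M - c₁*s^2)^2 := pow_le_pow_left₀ hC0 hCup 2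
    have h2 : Ss^2 ≤ (2*(s^2*K))^2 := by
      have h := pow_le_pow_left₀ (abs_nonneg Ss) hSb 2
      rwa [sq_abs] at h
    nlinarith only [h1, h2, mul_le_mul_of_nonneg_left hsD (sq_nonneg s),
      sq_nonneg (s^2*c₁)]
  have hRHS0' : 0 ≤ M - (c₁/2) * s^2 := by
    linarith only [hRHS0, mul_nonneg hc₁pos.le (sq_nonneg s)]
  calc Real.sqrt (Cs^2 + Ss^2) ≤ Real.sqrt ((M - (c₁/2) * s^2)^2) := Real.sqrt_le_sqrt hsq
    _ = M - (c₁/2) * s^2 := Real.sqrt_sq hRHS0'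
    _ = M - c₁/2 * s^2 := by ring
end
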